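/- Let X be a Hausdorff topological space. Then X × Y is symmetrizable for every metrizable topological space Y if and only if X × Y is symmetrizable for every metrizable topological space Y with at most one non-isolated point. -/

import Mathlib

open Filter Topology

/-- A semi-metric: nonnegative, symmetric, and vanishing exactly on the diagonal. -/
def IsSemiMetric {X : Type*} (d : X → X → ℝ) : Prop :=
  (∀ x y, 0 ≤ d x y) ∧ (∀ x y, d x y = d y x) ∧ (∀ x y, d x y = 0 ↔ x = y)

universe u

/-- A topological space is symmetrizable if some semi-metric determines its open sets. -/
def Symmetrizable (X : Type*) [TopologicalSpace X] : Prop :=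
  ∃ d : X → X → ℝ, IsSemiMetric d ∧
    ∀ U : Set X, IsOpen U ↔ ∀ x ∈ U, ∃ ε > 0, {y | d x y < ε} ⊆ U

section Auxiliary

open scoped Classical

variable {Y : Type*}

/-- distance of the prime factor at `p`. -/
noncomputable def pdist (m : MetricSpace Y) (p : Y) (a b : Y) : ℝ :=
  letI := m
  if a = b then 0 else dist a p + dist p b

lemma pdist_self (m : MetricSpace Y) (p a : Y) : pdist m p a a = 0 := if_pos rfl

lemma pdist_nonneg (m : MetricSpace Y) (p : Y) (a b : Y) : 0 ≤ pdist m p a b := by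
  letI := m
  unfold pdist
  split <;> positivity

lemma pdist_comm (m : MetricSpace Y) (p : Y) (a b : Y) : pdist m p a b = pdist m p b a := by
  letI := m
  unfold pdist
  rcases eq_or_ne a b with rfl | h
  · rfl
  · rw [if_neg h, if_neg h.symm, dist_comm a p, dist_comm p b]; ring

lemma pdist_triangle (m : MetricSpace Y) (p : Y) (a c b : Y) :
    pdist m p a b ≤ pdist m p a c + pdist m p c b := by
  letI := m
  unfold pdist
  rcases eq_or_ne a b with rfl | hab
  · rw [if_pos rfl]
    have h1 : (0:ℝ) ≤ if a = c then 0 else dist a p + dist p c := by split <;> positivity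
    have h2 : (0:ℝ) ≤ if c = a then 0 else dist c p + dist p a := by split <;> positivity
    linarith
  · rw [if_neg hab]
    rcases eq_or_ne a c with rfl | hac
    · rw [if_pos rfl, if_neg hab, zero_add]
    · rcases eq_or_ne c b with rfl | hcb
      · rw [if_pos rfl, if_neg hac, add_zero]
      · rw [if_neg hac, if_neg hcb]
        have := dist_nonneg (x := c) (y := p)
        have := dist_nonneg (x := p) (y := c)
        linarith

lemma pdist_eq_zero (m : MetricSpace Y) (p : Y) (a b : Y) (h : pdist m p a b = 0) : a = b := by
  letI := m
  unfold pdist at h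
  by_cases hab : a = b
  · exact hab
  · rw [if_neg hab] at h
    have h0 := dist_nonneg (x := a) (y := p)
    have h0' := dist_nonneg (x := p) (y := b)
    have h1 : dist a p = 0 := by linarith
    have h2 : dist p b = 0 := by linarith
    rw [dist_eq_zero] at h1
    rw [dist_eq_zero] at h2
    exact h1.trans h2

/-- the prime factor metric at `p` -/
noncomputable def primeMetric (m : MetricSpace Y) (p : Y) : MetricSpace Y :=
  { dist := pdist m p
    dist_self := pdist_self m p
    dist_comm := pdist_comm m p
    dist_triangle := pdist_triangle m p
    eq_of_dist_eq_zero := fun {a b} h => pdist_eq_zero m p a b h }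

lemma pdist_center (m : MetricSpace Y) (p b : Y) : pdist m p p b = (letI := m; dist p b) := by
  letI := m
  unfold pdist
  rcases eq_or_ne p b with rfl | h
  · rw [if_pos rfl, dist_self]
  · rw [if_neg h, dist_self, zero_add]

lemma primeMetric_nhds_self (m : MetricSpace Y) (p : Y) :
    @nhds Y (primeMetric m p).toUniformSpace.toTopologicalSpace p
      = @nhds Y m.toUniformSpace.toTopologicalSpace p := by
  have hball : ∀ ε : ℝ, @Metric.ball Y (primeMetric m p).toPseudoMetricSpace p ε
      = @Metric.ball Y m.toPseudoMetricSpace p ε := by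
    intro ε
    ext b
    letI := m
    show pdist m p b p < ε ↔ dist b p < ε
    rw [pdist_comm, pdist_center, dist_comm]
  have h1 := @Metric.nhds_basis_ball Y (primeMetric m p).toPseudoMetricSpace p
  have h2 := @Metric.nhds_basis_ball Y m.toPseudoMetricSpace p
  apply Filter.ext
  intro s
  rw [h1.mem_iff, h2.mem_iff]
  simp only [hball]

lemma primeMetric_nhds_ne (m : MetricSpace Y) (p b : Y) (hb : b ≠ p) :
    @nhds Y (primeMetric m p).toUniformSpace.toTopologicalSpace b = pure b := by
  letI := m
  refine le_antisymm (le_pure_iff.2 ?_) (@pure_le_nhds Y (primeMetric m p).toUniformSpace.toTopologicalSpace b)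
  have h1 := @Metric.nhds_basis_ball Y (primeMetric m p).toPseudoMetricSpace b
  rw [h1.mem_iff]
  refine ⟨dist b p, dist_pos.2 hb, ?_⟩
  intro c hc
  show c = b
  have : pdist m p c b < dist b p := hc
  by_contra hcb
  unfold pdist at this
  rw [if_neg hcb, dist_comm b p] at this
  have := dist_nonneg (x := c) (y := p)
  have := dist_nonneg (x := p) (y := b)
  linarith [(show dist p b ≤ dist c p + dist p b by linarith)]

lemma primeMetric_nhds_le (m : MetricSpace Y) (p b : Y) :
    @nhds Y (primeMetric m p).toUniformSpace.toTopologicalSpace b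
      ≤ @nhds Y m.toUniformSpace.toTopologicalSpace b := by
  rcases eq_or_ne b p with rfl | h
  · rw [primeMetric_nhds_self]
  · rw [primeMetric_nhds_ne m p b h]
    exact @pure_le_nhds Y m.toUniformSpace.toTopologicalSpace b

lemma tendsto_of_small {Z : Type*} [TopologicalSpace Z] {e : Z → Z → ℝ}
    (hgen : ∀ U : Set Z, IsOpen U ↔ ∀ x ∈ U, ∃ ε > 0, {y | e x y < ε} ⊆ U)
    {f : ℕ → Z} {z : Z} (h : ∀ i : ℕ, e z (f i) < 1 / (i + 1)) :
    Tendsto f atTop (𝓝 z) := by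
  rw [(nhds_basis_opens z).tendsto_right_iff]
  rintro V ⟨hzV, hV⟩
  obtain ⟨ε, hε, hb⟩ := (hgen V).1 hV z hzV
  obtain ⟨N, hN⟩ := exists_nat_one_div_lt hε
  filter_upwards [eventually_ge_atTop N] with n hn
  refine hb ?_
  have h1 : (1 : ℝ) / (n + 1) ≤ 1 / (N + 1) := by
    apply one_div_le_one_div_of_le
    · positivity
    · exact_mod_cast Nat.succ_le_succ hn
  exact Set.mem_setOf.2 (lt_of_lt_of_le (h n) (h1.trans hN.le))

lemma symm_open_of_seq {Z : Type*} [TopologicalSpace Z] (hZ : Symmetrizable Z) (U : Set Z)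
    (h : ∀ (q : ℕ → Z) (z : Z), z ∈ U → Tendsto q atTop (𝓝 z) → ∃ n, q n ∈ U) :
    IsOpen U := by
  obtain ⟨e, -, hgen⟩ := hZ
  rw [hgen]
  intro z hz
  by_contra hc
  push_neg at hc
  have hc' : ∀ n : ℕ, ∃ w, e z w < 1 / (n + 1) ∧ w ∉ U := by
    intro n
    obtain ⟨w, hw1, hw2⟩ := Set.not_subset.1 (hc (1 / (n + 1)) (by positivity))
    exact ⟨w, hw1, hw2⟩
  choose q hq1 hq2 using hc'
  obtain ⟨n, hn⟩ := h q z hz (tendsto_of_small hgen hq1)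
  exact hq2 n hn

lemma freq_small {Z : Type*} [TopologicalSpace Z] [T2Space Z] {e : Z → Z → ℝ}
    (hsm : IsSemiMetric e)
    (hgen : ∀ U : Set Z, IsOpen U ↔ ∀ x ∈ U, ∃ ε > 0, {y | e x y < ε} ⊆ U)
    (u : ℕ → Z) (x : Z) (hu : Tendsto u atTop (𝓝 x)) {ε : ℝ} (hε : 0 < ε) (K : ℕ) :
    ∃ k, K ≤ k ∧ e x (u k) < ε := by
  by_contra hc
  push_neg at hc
  set v : ℕ → Z := fun j => u (j + K) with hv
  have hvt : Tendsto v atTop (𝓝 x) := hu.comp (tendsto_add_atTop_nat K)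
  have hvA : ∀ j, ε ≤ e x (v j) := fun j => hc (j + K) (Nat.le_add_left K j)
  have hxA : x ∉ Set.range v := by
    rintro ⟨j, hj⟩
    have := hvA j
    rw [hj, (hsm.2.2 x x).2 rfl] at this
    linarith
  have hUopen : ¬ IsOpen ((Set.range v)ᶜ) := by
    intro hU
    obtain ⟨j, hj⟩ := (hvt.eventually_mem (hU.mem_nhds hxA)).exists
    exact hj (Set.mem_range_self j)
  rw [hgen] at hUopen
  push_neg at hUopen
  obtain ⟨z, hzU, hz⟩ := hUopen
  have hz' : ∀ n : ℕ, ∃ w, e z w < 1 / (n + 1) ∧ w ∈ Set.range v := by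
    intro n
    obtain ⟨w, hw1, hw2⟩ := Set.not_subset.1 (hz (1 / (n + 1)) (by positivity))
    exact ⟨w, hw1, Set.not_notMem.1 hw2⟩
  choose f hf1 hf2 using hz'
  have hfz : Tendsto f atTop (𝓝 z) := tendsto_of_small hgen hf1
  have hzC : z ∈ insert x (Set.range v) :=
    hvt.isCompact_insert_range.isClosed.mem_of_tendsto hfz
      (Eventually.of_forall fun i => Set.subset_insert _ _ (hf2 i))
  have hzx : z = x := by
    rcases hzC with h | h
    · exact h
    · exact absurd h hzU
  obtain ⟨i, hi⟩ := exists_nat_one_div_lt hε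
  have h1 := hf1 i
  rw [hzx] at h1
  obtain ⟨j, hj⟩ := hf2 i
  rw [← hj] at h1
  have := hvA j
  have h2 : (1:ℝ) / (i + 1) < ε := hi
  linarith


lemma step1_lemma {X Y : Type*} [tX : TopologicalSpace X] (t' tm : TopologicalSpace Y)
    (hle : ∀ b : Y, @nhds Y t' b ≤ @nhds Y tm b)
    (hsym : @Symmetrizable (X × Y) (@instTopologicalSpaceProd X Y tX t'))
    (D : X × Y → X × Y → ℝ) (U : Set (X × Y))
    (hball : ∀ p ∈ U, ∃ ε > 0, {q | D p q < ε} ⊆ U)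
    (hsmall : ∀ (q : ℕ → X × Y) (p : X × Y),
      Tendsto (fun n => (q n).1) atTop (@nhds X tX p.1) →
      Tendsto (fun n => (q n).2) atTop (@nhds Y tm p.2) →
      ∀ ε > 0, ∃ n, D p (q n) < ε) :
    @IsOpen (X × Y) (@instTopologicalSpaceProd X Y tX t') U := by
  letI := t'
  refine symm_open_of_seq hsym U ?_
  intro q p hpU hq
  have h1 : Tendsto (fun n => (q n).1) atTop (𝓝 p.1) := ((continuous_fst.tendsto p).comp hq)
  have h2' : Tendsto (fun n => (q n).2) atTop (𝓝 p.2) := ((continuous_snd.tendsto p).comp hq)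
  have h2 : Tendsto (fun n => (q n).2) atTop (@nhds Y tm p.2) := h2'.mono_right (hle p.2)
  obtain ⟨ε, hε, hb⟩ := hball p hpU
  obtain ⟨n, hn⟩ := hsmall q p h1 h2 ε hε
  exact ⟨n, hb hn⟩

lemma step2_lemma {X Y : Type*} [tX : TopologicalSpace X] [tm : TopologicalSpace Y]
    (t' : Y → TopologicalSpace Y)
    (hnh : ∀ a : Y, @nhds Y (t' a) a = 𝓝 a)
    (U : Set (X × Y))
    (hopen : ∀ a : Y, @IsOpen (X × Y) (@instTopologicalSpaceProd X Y tX (t' a)) U) :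
    IsOpen U := by
  rw [isOpen_iff_mem_nhds]
  rintro ⟨x, a⟩ hpU
  have h4 : U ∈ @nhds (X × Y) (@instTopologicalSpaceProd X Y tX (t' a)) (x, a) := by
    letI := t' a
    exact (hopen a).mem_nhds hpU
  rw [@nhds_prod_eq X Y tX (t' a), hnh a] at h4
  rw [nhds_prod_eq]
  exact h4

end Auxiliary

/-- For a Hausdorff space `X`, the product `X × Y` is symmetrizable for every
metrizable `Y` iff it is for every prime metrizable `Y` (metrizable with at most
one non-isolated point). -/
theorem stmt17 {X : Type u} [TopologicalSpace X] [T2Space X] :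
    (∀ (Y : Type u) [TopologicalSpace Y], TopologicalSpace.MetrizableSpace Y →
        Symmetrizable (X × Y)) ↔
    (∀ (Y : Type u) [TopologicalSpace Y], TopologicalSpace.MetrizableSpace Y →
        ({y : Y | ¬IsOpen ({y} : Set Y)}).Subsingleton →
        Symmetrizable (X × Y)) := by
  constructor
  · intro h Y tY hm _
    exact h Y hm
  · intro hp Y tY hm
    obtain ⟨m, rfl⟩ : ∃ m : MetricSpace Y, m.toUniformSpace.toTopologicalSpace = tY :=
      ⟨@TopologicalSpace.metrizableSpaceMetric Y tY hm, rfl⟩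
    letI := m
    -- Step 0: a semimetric on X with the ball property and frequent smallness.
    obtain ⟨e, he, hegen⟩ :=
      hp PUnit.{u+1} inferInstance (fun a _ b _ => Subsingleton.elim a b)
    set d : X → X → ℝ := fun x x' => e (x, PUnit.unit) (x', PUnit.unit) with hd
    have hdball : ∀ V : Set X, IsOpen V → ∀ x ∈ V, ∃ ε > 0, ∀ x', d x x' < ε → x' ∈ V := by
      intro V hV x hx
      have hV' : IsOpen ((fun z : X × PUnit.{u+1} => z.1) ⁻¹' V) := hV.preimage continuous_fst
      obtain ⟨ε, hε, hb⟩ := (hegen _).1 hV' (x, PUnit.unit) hx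
      exact ⟨ε, hε, fun x' h' => hb h'⟩
    have hfreq : ∀ (w : ℕ → X) (x : X), Tendsto w atTop (𝓝 x) → ∀ ε > 0, ∀ K : ℕ,
        ∃ k, K ≤ k ∧ d x (w k) < ε := by
      intro w x hw ε hε K
      exact freq_small he hegen (fun k => (w k, PUnit.unit)) (x, PUnit.unit)
        (hw.prodMk_nhds tendsto_const_nhds) hε K
    -- the symmetrics for the prime factors
    have hS : ∀ y : Y, @Symmetrizable (X × Y)
        (@instTopologicalSpaceProd X Y ‹TopologicalSpace X›
          (primeMetric m y).toUniformSpace.toTopologicalSpace) := by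
      intro y
      refine @hp Y (primeMetric m y).toUniformSpace.toTopologicalSpace
        (by letI := primeMetric m y; infer_instance) ?_
      intro a ha b hb
      have key : ∀ c : Y, c ∈ {z : Y |
          ¬@IsOpen Y (primeMetric m y).toUniformSpace.toTopologicalSpace ({z} : Set Y)} → c = y := by
        intro c hc
        by_contra hcy
        refine hc ?_
        rw [@isOpen_singleton_iff_nhds_eq_pure Y (primeMetric m y).toUniformSpace.toTopologicalSpace c]
        exact primeMetric_nhds_ne m y c hcy
      rw [key a ha, key b hb]
    -- the symmetric on the product
    refine ⟨fun p q => d p.1 q.1 + dist p.2 q.2, ⟨?_, ?_, ?_⟩, ?_⟩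
    · intro p q
      exact add_nonneg (he.1 _ _) dist_nonneg
    · intro p q
      show d p.1 q.1 + dist p.2 q.2 = d q.1 p.1 + dist q.2 p.2
      rw [show d p.1 q.1 = d q.1 p.1 from he.2.1 _ _, dist_comm]
    · intro p q
      show d p.1 q.1 + dist p.2 q.2 = 0 ↔ p = q
      constructor
      · intro h
        have hd1 : (0:ℝ) ≤ d p.1 q.1 := he.1 _ _
        have hd2 : (0:ℝ) ≤ dist p.2 q.2 := dist_nonneg
        have h1 : d p.1 q.1 = 0 := by linarith
        have h2 : dist p.2 q.2 = 0 := by linarith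
        have h5 : (p.1, PUnit.unit) = (q.1, PUnit.unit) := (he.2.2 _ _).1 h1
        have h3 : p.1 = q.1 := (Prod.ext_iff.1 h5).1
        have h4 : p.2 = q.2 := dist_eq_zero.1 h2
        exact Prod.ext h3 h4
      · rintro rfl
        show e (p.1, PUnit.unit) (p.1, PUnit.unit) + dist p.2 p.2 = 0
        rw [(he.2.2 _ _).2 rfl, dist_self, add_zero]
    · intro U
      constructor
      · -- open implies ball condition
        intro hU p hpU
        have hU' : U ∈ 𝓝 p := hU.mem_nhds hpU
        rw [nhds_prod_eq] at hU'
        obtain ⟨V, hV, W, hW, hVW⟩ := Filter.mem_prod_iff.1 hU'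
        obtain ⟨V', hV'sub, hV'open, hxV'⟩ := mem_nhds_iff.1 hV
        obtain ⟨ε₁, hε₁, hb₁⟩ := hdball V' hV'open p.1 hxV'
        obtain ⟨ε₂, hε₂, hb₂⟩ := Metric.mem_nhds_iff.1 hW
        refine ⟨min ε₁ ε₂, lt_min hε₁ hε₂, ?_⟩
        intro q hq
        have hq' : d p.1 q.1 + dist p.2 q.2 < min ε₁ ε₂ := hq
        have hd1 : (0:ℝ) ≤ d p.1 q.1 := he.1 _ _
        have hd2 : (0:ℝ) ≤ dist p.2 q.2 := dist_nonneg
        have hq1 : d p.1 q.1 < ε₁ := by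
          have := min_le_left ε₁ ε₂; linarith
        have hq2 : dist p.2 q.2 < ε₂ := by
          have := min_le_right ε₁ ε₂; linarith
        exact hVW ⟨hV'sub (hb₁ q.1 hq1), hb₂ (by rw [Metric.mem_ball, dist_comm]; exact hq2)⟩
      · -- ball condition implies open
        intro hball
        refine step2_lemma (fun y => (primeMetric m y).toUniformSpace.toTopologicalSpace)
          (fun a => primeMetric_nhds_self m a) U ?_
        intro y
        refine step1_lemma _ _ (primeMetric_nhds_le m y) (hS y) _ U hball ?_
        intro q p h1 h2 ε hε
        have h3 : ∀ᶠ n in atTop, dist p.2 (q n).2 < ε / 2 := by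
          filter_upwards [Metric.tendsto_nhds.1 h2 (ε / 2) (half_pos hε)] with n hn
          rw [dist_comm]
          exact hn
        obtain ⟨N, hN⟩ := eventually_atTop.1 h3
        obtain ⟨k, hk1, hk2⟩ := hfreq (fun n => (q n).1) p.1 h1 (ε / 2) (half_pos hε) N
        refine ⟨k, ?_⟩
        show d p.1 (q k).1 + dist p.2 (q k).2 < ε
        have := hN k hk1
        linarith
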